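/- Let K₁, K₂, K₃, K₄ ∈ ℝ with K₃ > 0, set κ = K₂/K₃, and let n = (n₁,n₂,n₃) : ℝ³ → ℝ³ be a twice continuously differentiable vector field with |n(x)| = 1 for every x. Then at every point of ℝ³, the Frank–Oseen free elastic energy density satisfies: ½K₁(∇·n)² + ½K₂(n·∇×n)² + ½K₃|n×(∇×n)|² + ½(K₂+K₄)∇·[(n·∇)n − (∇·n)n] = ½(K₁−K₂−K₄)(∇·n)² + ½K₃⟨Z(n)(∇×n), ∇×n⟩ + ½(K₂+K₄)(⟨∇n₁, ∂n/∂x⟩ + ⟨∇n₂, ∂n/∂y⟩ + ⟨∇n₃, ∂n/∂z⟩). -/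

import Mathlib

open Matrix

/-- The matrix `Z(n) = I - (1-κ) n nᵀ`. -/
noncomputable def Zmat (κ : ℝ) (n : Fin 3 → ℝ) : Matrix (Fin 3) (Fin 3) ℝ :=
  1 - (1 - κ) • Matrix.vecMulVec n n

/-- Partial derivative of a scalar field on `ℝ³` in the `i`-th coordinate direction. -/
noncomputable def pd (f : (Fin 3 → ℝ) → ℝ) (i : Fin 3) (x : Fin 3 → ℝ) : ℝ :=
  fderiv ℝ f x (Pi.single i 1)

/-- Divergence of a vector field on `ℝ³`. -/
noncomputable def vdiv (v : (Fin 3 → ℝ) → (Fin 3 → ℝ)) (x : Fin 3 → ℝ) : ℝ :=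
  ∑ i, pd (fun y => v y i) i x

/-- Curl of a vector field on `ℝ³`. -/
noncomputable def vcurl (v : (Fin 3 → ℝ) → (Fin 3 → ℝ)) (x : Fin 3 → ℝ) : Fin 3 → ℝ :=
  ![pd (fun y => v y 2) 1 x - pd (fun y => v y 1) 2 x,
    pd (fun y => v y 0) 2 x - pd (fun y => v y 2) 0 x,
    pd (fun y => v y 1) 0 x - pd (fun y => v y 0) 1 x]

lemma pd_sub {f g : (Fin 3 → ℝ) → ℝ} {p : Fin 3 → ℝ} (hf : DifferentiableAt ℝ f p)
    (hg : DifferentiableAt ℝ g p) (i : Fin 3) :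
    pd (fun x => f x - g x) i p = pd f i p - pd g i p := by
  unfold pd
  rw [fderiv_fun_sub hf hg]; rfl

lemma pd_mul {f g : (Fin 3 → ℝ) → ℝ} {p : Fin 3 → ℝ} (hf : DifferentiableAt ℝ f p)
    (hg : DifferentiableAt ℝ g p) (i : Fin 3) :
    pd (fun x => f x * g x) i p = pd f i p * g p + f p * pd g i p := by
  unfold pd
  rw [fderiv_fun_mul hf hg]
  simp; ring

lemma pd_sum {F : Fin 3 → (Fin 3 → ℝ) → ℝ} {p : Fin 3 → ℝ}
    (hf : ∀ j, DifferentiableAt ℝ (F j) p) (i : Fin 3) :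
    pd (fun x => ∑ j, F j x) i p = ∑ j, pd (F j) i p := by
  unfold pd
  rw [fderiv_fun_sum (fun j _ => hf j)]
  simp

lemma pd_pd {f : (Fin 3 → ℝ) → ℝ} {p : Fin 3 → ℝ} (hf : ContDiff ℝ 2 f) (i j : Fin 3) :
    pd (fun x => pd f j x) i p
      = fderiv ℝ (fderiv ℝ f) p (Pi.single i 1) (Pi.single j 1) := by
  have hd : DifferentiableAt ℝ (fderiv ℝ f) p :=
    ((hf.fderiv_right (m := 1) (by norm_num)).differentiable one_ne_zero).differentiableAt
  unfold pd
  rw [fderiv_clm_apply hd (differentiableAt_const _)]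
  simp

/-- the Frank–Oseen free elastic energy density identity for a unit-length
C² director field `n`, with `κ = K₂/K₃`. -/
theorem stmt6 (K₁ K₂ K₃ K₄ : ℝ) (hK₃ : 0 < K₃)
    (n : (Fin 3 → ℝ) → (Fin 3 → ℝ)) (hn : ContDiff ℝ 2 n)
    (hunit : ∀ x, n x ⬝ᵥ n x = 1) (p : Fin 3 → ℝ) :
    (1/2) * K₁ * (vdiv n p) ^ 2 + (1/2) * K₂ * (n p ⬝ᵥ vcurl n p) ^ 2
      + (1/2) * K₃ * ((crossProduct (n p) (vcurl n p)) ⬝ᵥ (crossProduct (n p) (vcurl n p)))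
      + (1/2) * (K₂ + K₄) *
          (∑ i, pd (fun x => (∑ j, n x j * pd (fun y => n y i) j x) - vdiv n x * n x i) i p) =
    (1/2) * (K₁ - K₂ - K₄) * (vdiv n p) ^ 2
      + (1/2) * K₃ * (((Zmat (K₂ / K₃) (n p)) *ᵥ vcurl n p) ⬝ᵥ vcurl n p)
      + (1/2) * (K₂ + K₄) *
          (∑ i, ∑ j, pd (fun y => n y i) j p * pd (fun y => n y j) i p) := by
  have hC : ∀ i, ContDiff ℝ 2 (fun y => n y i) := fun i =>
    (ContinuousLinearMap.proj i : (Fin 3 → ℝ) →L[ℝ] ℝ).contDiff.comp hn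
  have hnd : ∀ i x, DifferentiableAt ℝ (fun y => n y i) x := fun i x =>
    ((hC i).differentiable (by norm_num)).differentiableAt
  have hDd : ∀ i j x, DifferentiableAt ℝ (fun x => pd (fun y => n y i) j x) x := fun i j x =>
    ((((hC i).fderiv_right (m := 1) (by norm_num)).clm_apply
      contDiff_const).differentiable one_ne_zero).differentiableAt
  have hsym : ∀ i v w, fderiv ℝ (fderiv ℝ (fun y => n y i)) p v w
      = fderiv ℝ (fderiv ℝ (fun y => n y i)) p w v := fun i =>
    (hC i).contDiffAt.isSymmSndFDerivAt (by norm_num)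
  have hdivd : ∀ x, DifferentiableAt ℝ (fun x => vdiv n x) x := by
    intro x
    simp only [vdiv]
    exact DifferentiableAt.fun_sum fun j _ => hDd j j x
  -- divergence identity
  have hdiv : (∑ i, pd (fun x => (∑ j, n x j * pd (fun y => n y i) j x) - vdiv n x * n x i) i p)
      = (∑ i, ∑ j, pd (fun y => n y i) j p * pd (fun y => n y j) i p) - (vdiv n p)^2 := by
    have step : ∀ i : Fin 3,
        pd (fun x => (∑ j, n x j * pd (fun y => n y i) j x) - vdiv n x * n x i) i p
        = (∑ j, (pd (fun y => n y j) i p * pd (fun y => n y i) j p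
            + n p j * fderiv ℝ (fderiv ℝ (fun y => n y i)) p (Pi.single i 1) (Pi.single j 1)))
          - ((∑ j, fderiv ℝ (fderiv ℝ (fun y => n y j)) p (Pi.single i 1) (Pi.single j 1)) * n p i
            + vdiv n p * pd (fun y => n y i) i p) := by
      intro i
      rw [pd_sub (DifferentiableAt.fun_sum fun j _ => (hnd j p).fun_mul (hDd i j p))
        ((hdivd p).fun_mul (hnd i p)) i]
      congr 1
      · rw [pd_sum (fun j => (hnd j p).fun_mul (hDd i j p)) i]
        refine Finset.sum_congr rfl fun j _ => ?_
        rw [pd_mul (hnd j p) (hDd i j p) i, pd_pd (hC i) i j]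
      · have : pd (fun x => vdiv n x * n x i) i p
            = pd (fun x => vdiv n x) i p * n p i + vdiv n p * pd (fun y => n y i) i p :=
          pd_mul (hdivd p) (hnd i p) i
        rw [this]
        congr 2
        show pd (fun x => ∑ j, pd (fun y => n y j) j x) i p = _
        rw [pd_sum (fun j => hDd j j p) i]
        exact Finset.sum_congr rfl fun j _ => pd_pd (hC j) i j
    simp only [step]
    simp only [vdiv, Fin.sum_univ_three]
    rw [hsym 0 (Pi.single 0 1) (Pi.single 1 1), hsym 0 (Pi.single 0 1) (Pi.single 2 1),
        hsym 1 (Pi.single 1 1) (Pi.single 0 1), hsym 1 (Pi.single 1 1) (Pi.single 2 1),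
        hsym 2 (Pi.single 2 1) (Pi.single 0 1), hsym 2 (Pi.single 2 1) (Pi.single 1 1)]
    ring
  rw [hdiv]
  -- now pointwise algebra
  have h := hunit p
  have hκ : K₃ * (K₂ / K₃) = K₂ := by field_simp
  set a := n p with ha
  set c := vcurl n p with hc
  simp only [dotProduct, Fin.sum_univ_three] at h ⊢
  simp only [cross_apply, Zmat, Matrix.mulVec, dotProduct, Fin.sum_univ_three,
    Matrix.sub_apply, Matrix.smul_apply, Matrix.one_apply, Matrix.vecMulVec_apply,
    smul_eq_mul, Matrix.cons_val_zero, Matrix.cons_val_one, Matrix.head_cons,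
    Matrix.cons_val_two, Matrix.tail_cons]
  simp only [show (0:Fin 3) ≠ 1 by decide, show (0:Fin 3) ≠ 2 by decide,
    show (1:Fin 3) ≠ 0 by decide, show (1:Fin 3) ≠ 2 by decide,
    show (2:Fin 3) ≠ 0 by decide, show (2:Fin 3) ≠ 1 by decide,
    if_true, if_false, ite_true, ite_false, if_neg, eq_self_iff_true]
  norm_num
  linear_combination (K₃ * (c 0 ^ 2 + c 1 ^ 2 + c 2 ^ 2) / 2) * h
    - ((a 0 * c 0 + a 1 * c 1 + a 2 * c 2) ^ 2 / 2) * hκ
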